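/- Let G be a connected, bipartite, k-regular finite simple graph with k ≥ 3. Then the strong matching preclusion number of G equals 2, and every optimal strong matching preclusion set of G is a set of two vertices from the same bipartition class of G. -/

import Mathlib

/-- The generating relation of the bubble-sort star graph: `u = v ∘ ⟨1,i⟩` for some
`i ∈ [2,n]` (0-based: swap of positions `0` and `i` with `i ≠ 0`), or `u = v ∘ ⟨i-1,i⟩`
for some `i ∈ [3,n]` (0-based: swap of consecutive positions `i, j = i+1` with `i ≥ 1`). -/
def bssRel (n : ℕ) (u v : Equiv.Perm (Fin n)) : Prop :=
  (∃ i : Fin n, (i : ℕ) ≠ 0 ∧ u = v * Equiv.swap ⟨0, i.pos⟩ i) ∨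
  (∃ i j : Fin n, (i : ℕ) + 1 = (j : ℕ) ∧ 1 ≤ (i : ℕ) ∧ u = v * Equiv.swap i j)

/-- The `n`-dimensional bubble-sort star graph `BS_n`, on the permutations of `{1,…,n}`. -/
def BS (n : ℕ) : SimpleGraph (Equiv.Perm (Fin n)) := SimpleGraph.fromRel (bssRel n)

/-- A set of edges `M` is a perfect matching of `G`: `M` consists of edges of `G` and
every vertex lies in exactly one edge of `M`. -/
def IsPM {V : Type*} (G : SimpleGraph V) (M : Set (Sym2 V)) : Prop :=
  M ⊆ G.edgeSet ∧ ∀ v : V, ∃! e : Sym2 V, e ∈ M ∧ v ∈ e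

/-- A set of edges `M` is an almost-perfect matching of `G`: there is exactly one
vertex lying in no edge of `M`, and every other vertex lies in exactly one edge of `M`. -/
def IsAPM {V : Type*} (G : SimpleGraph V) (M : Set (Sym2 V)) : Prop :=
  M ⊆ G.edgeSet ∧ ∃ w : V, (∀ e ∈ M, w ∉ e) ∧ ∀ v : V, v ≠ w → ∃! e : Sym2 V, e ∈ M ∧ v ∈ e

/-- `G` has neither a perfect matching nor an almost-perfect matching. -/
def HasNoMatchings {V : Type*} (G : SimpleGraph V) : Prop :=
  (¬ ∃ M, IsPM G M) ∧ (¬ ∃ M, IsAPM G M)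

/-- `(S, F)` is a strong matching preclusion set of `G`: deleting the vertices of `S`
(with all incident edges) and the edges of `F` leaves a graph with neither a perfect
matching nor an almost-perfect matching. -/
def IsSMPSet {V : Type*} (G : SimpleGraph V) (S : Set V) (F : Set (Sym2 V)) : Prop :=
  F ⊆ G.edgeSet ∧ HasNoMatchings ((G.deleteEdges F).induce (Sᶜ : Set V))

/-- `F` is a matching preclusion set of `G`: `G - F` has neither a perfect matching
nor an almost-perfect matching. -/
def IsMPSet {V : Type*} (G : SimpleGraph V) (F : Set (Sym2 V)) : Prop :=
  F ⊆ G.edgeSet ∧ HasNoMatchings (G.deleteEdges F)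

/-- `BS_n^i`: the set of permutations whose last entry equals `i`. -/
def BSslice {n : ℕ} (i : Fin n) : Set (Equiv.Perm (Fin n)) :=
  {a | a ⟨n - 1, Nat.sub_lt i.pos Nat.one_pos⟩ = i}

/-- `(V₁, V₂)` is a bipartition of `G`: the two classes partition the vertices and every
edge has one end in each class. -/
def Bipartition {V : Type*} (G : SimpleGraph V) (V1 V2 : Set V) : Prop :=
  Disjoint V1 V2 ∧ V1 ∪ V2 = Set.univ ∧
    ∀ ⦃u v⦄, G.Adj u v → (u ∈ V1 ∧ v ∈ V2) ∨ (u ∈ V2 ∧ v ∈ V1)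

section SMPAux

open Classical

variable {V : Type*}

/-- `M` is a matching of `H` covering exactly the vertices of `W`. -/
def CoversAll (H : SimpleGraph V) (M : Set (Sym2 V)) (W : Set V) : Prop :=
  M ⊆ H.edgeSet ∧ (∀ v ∈ W, ∃! e, e ∈ M ∧ v ∈ e) ∧ (∀ e ∈ M, ∀ v ∈ e, v ∈ W)

lemma transfer_PM {H : SimpleGraph V} {W : Set V} :
    (∃ M, IsPM (H.induce W) M) ↔ ∃ M, CoversAll H M W := by
  constructor
  · rintro ⟨M', hsub, huniq⟩
    refine ⟨Sym2.map Subtype.val '' M', ?_, ?_, ?_⟩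
    · rintro e ⟨e', he', rfl⟩
      induction e' using Sym2.ind with
      | _ x y =>
        have := hsub he'
        rw [SimpleGraph.mem_edgeSet] at this
        rw [Sym2.map_pair_eq, SimpleGraph.mem_edgeSet]
        exact this
    · intro v hv
      obtain ⟨e', ⟨he'M, he'v⟩, hu⟩ := huniq ⟨v, hv⟩
      refine ⟨Sym2.map Subtype.val e', ⟨⟨e', he'M, rfl⟩, ?_⟩, ?_⟩
      · exact Sym2.mem_map.2 ⟨⟨v, hv⟩, he'v, rfl⟩
      · rintro e ⟨⟨m, hm, rfl⟩, hvm⟩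
        obtain ⟨a, ham, hav⟩ := Sym2.mem_map.1 hvm
        have : a = ⟨v, hv⟩ := Subtype.ext hav
        subst this
        rw [hu m ⟨hm, ham⟩]
    · rintro e ⟨e', he', rfl⟩ v hv
      obtain ⟨a, _, rfl⟩ := Sym2.mem_map.1 hv
      exact a.2
  · rintro ⟨M, hsub, huniq, hend⟩
    refine ⟨{e' | Sym2.map Subtype.val e' ∈ M}, ?_, ?_⟩
    · intro e' he'
      induction e' using Sym2.ind with
      | _ x y =>
        have he2 : Sym2.map Subtype.val s(x, y) ∈ M := he'
        rw [Sym2.map_pair_eq] at he2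
        have := hsub he2
        rw [SimpleGraph.mem_edgeSet] at this ⊢
        exact this
    · intro v
      obtain ⟨e, ⟨heM, hev⟩, hu⟩ := huniq ↑v v.2
      induction e using Sym2.ind with
      | _ a b =>
        have ha : a ∈ W := hend _ heM a (Sym2.mem_mk_left a b)
        have hb : b ∈ W := hend _ heM b (Sym2.mem_mk_right a b)
        refine ⟨s(⟨a, ha⟩, ⟨b, hb⟩), ⟨?_, ?_⟩, ?_⟩
        · show Sym2.map _ _ ∈ M
          rw [Sym2.map_pair_eq]; exact heM
        · rcases Sym2.mem_iff.1 hev with h | h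
          · exact Sym2.mem_iff.2 (Or.inl (Subtype.ext h))
          · exact Sym2.mem_iff.2 (Or.inr (Subtype.ext h))
        · rintro e'' ⟨he''M, hve''⟩
          have h1 : Sym2.map Subtype.val e'' = s(a, b) := by
            apply hu
            exact ⟨he''M, Sym2.mem_map.2 ⟨v, hve'', rfl⟩⟩
          apply Sym2.map.injective Subtype.val_injective
          rw [h1, Sym2.map_pair_eq]

lemma transfer_APM {H : SimpleGraph V} {W : Set V} :
    (∃ M, IsAPM (H.induce W) M) ↔ ∃ w ∈ W, ∃ M, CoversAll H M (W \ {w}) := by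
  constructor
  · rintro ⟨M', hsub, w', hw', huniq⟩
    refine ⟨↑w', w'.2, Sym2.map Subtype.val '' M', ?_, ?_, ?_⟩
    · rintro e ⟨e', he', rfl⟩
      induction e' using Sym2.ind with
      | _ x y =>
        have := hsub he'
        rw [SimpleGraph.mem_edgeSet] at this
        rw [Sym2.map_pair_eq, SimpleGraph.mem_edgeSet]
        exact this
    · rintro v ⟨hv, hvw⟩
      have hne : (⟨v, hv⟩ : ↑W) ≠ w' := fun h => hvw (by rw [← Subtype.ext_iff.1 h]; rfl)
      obtain ⟨e', ⟨he'M, he'v⟩, hu⟩ := huniq ⟨v, hv⟩ hne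
      refine ⟨Sym2.map Subtype.val e', ⟨⟨e', he'M, rfl⟩, ?_⟩, ?_⟩
      · exact Sym2.mem_map.2 ⟨⟨v, hv⟩, he'v, rfl⟩
      · rintro e ⟨⟨m, hm, rfl⟩, hvm⟩
        obtain ⟨a, ham, hav⟩ := Sym2.mem_map.1 hvm
        have : a = ⟨v, hv⟩ := Subtype.ext hav
        subst this
        rw [hu m ⟨hm, ham⟩]
    · rintro e ⟨e', he', rfl⟩ v hv
      obtain ⟨a, ha, rfl⟩ := Sym2.mem_map.1 hv
      refine ⟨a.2, fun hcon => hw' e' he' ?_⟩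
      have : a = w' := Subtype.ext hcon
      rwa [← this]
  · rintro ⟨w, hw, M, hsub, huniq, hend⟩
    refine ⟨{e' | Sym2.map Subtype.val e' ∈ M}, ?_, ⟨w, hw⟩, ?_, ?_⟩
    · intro e' he'
      induction e' using Sym2.ind with
      | _ x y =>
        have he2 : Sym2.map Subtype.val s(x, y) ∈ M := he'
        rw [Sym2.map_pair_eq] at he2
        have := hsub he2
        rw [SimpleGraph.mem_edgeSet] at this ⊢
        exact this
    · intro e' he' hwe'
      have : (w : V) ∈ Sym2.map Subtype.val e' := Sym2.mem_map.2 ⟨⟨w, hw⟩, hwe', rfl⟩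
      exact (hend _ he' w this).2 rfl
    · intro v hvne
      have hv : (v : V) ∈ W \ {w} := ⟨v.2, fun h => hvne (Subtype.ext h)⟩
      obtain ⟨e, ⟨heM, hev⟩, hu⟩ := huniq ↑v hv
      induction e using Sym2.ind with
      | _ a b =>
        have ha : a ∈ W := (hend _ heM a (Sym2.mem_mk_left a b)).1
        have hb : b ∈ W := (hend _ heM b (Sym2.mem_mk_right a b)).1
        refine ⟨s(⟨a, ha⟩, ⟨b, hb⟩), ⟨?_, ?_⟩, ?_⟩
        · show Sym2.map _ _ ∈ M
          rw [Sym2.map_pair_eq]; exact heM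
        · rcases Sym2.mem_iff.1 hev with h | h
          · exact Sym2.mem_iff.2 (Or.inl (Subtype.ext h))
          · exact Sym2.mem_iff.2 (Or.inr (Subtype.ext h))
        · rintro e'' ⟨he''M, hve''⟩
          have h1 : Sym2.map Subtype.val e'' = s(a, b) := by
            apply hu
            exact ⟨he''M, Sym2.mem_map.2 ⟨v, hve'', rfl⟩⟩
          apply Sym2.map.injective Subtype.val_injective
          rw [h1, Sym2.map_pair_eq]

end SMPAux

section SMPAux2

variable {V : Type*}

/-- Counting: a matching of `H ≤ G` covering exactly `W` pairs `V1 ∩ W` with `V2 ∩ W`. -/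
lemma covers_count [Fintype V] {G H : SimpleGraph V} (hHG : H ≤ G) {V1 V2 : Set V}
    (hbip : Bipartition G V1 V2) {M : Set (Sym2 V)} {W : Set V}
    (h : CoversAll H M W) : (V1 ∩ W).ncard = (V2 ∩ W).ncard := by
  obtain ⟨hsub, huniq, hend⟩ := h
  have hdisj := hbip.1
  have key : ∀ v ∈ W, ∃ u, H.Adj v u ∧ s(v, u) ∈ M := by
    intro v hv
    obtain ⟨e, ⟨heM, hev⟩, -⟩ := huniq v hv
    refine ⟨Sym2.Mem.other hev, ?_, ?_⟩
    · have := hsub heM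
      rw [← Sym2.other_spec hev] at this
      exact this
    · rw [Sym2.other_spec hev]; exact heM
  choose! p hp1 hp2 using key
  have hpW : ∀ v ∈ W, p v ∈ W := fun v hv =>
    hend _ (hp2 v hv) (p v) (Sym2.mem_mk_right _ _)
  have hpp : ∀ v ∈ W, p (p v) = v := by
    intro v hv
    obtain ⟨e, -, hu⟩ := huniq (p v) (hpW v hv)
    have h1 : s(p v, p (p v)) = e := hu _ ⟨hp2 _ (hpW v hv), Sym2.mem_mk_left _ _⟩
    have h2 : s(v, p v) = e := hu _ ⟨hp2 v hv, Sym2.mem_mk_right _ _⟩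
    rw [← h2] at h1
    rcases Sym2.eq_iff.1 h1 with ⟨ha, hb⟩ | ⟨ha, hb⟩
    · exact absurd ha.symm (hp1 v hv).ne
    · exact hb
  have hbij : Set.BijOn p (V1 ∩ W) (V2 ∩ W) := by
    refine ⟨?_, ?_, ?_⟩
    · rintro v ⟨hv1, hvW⟩
      have hadj := hHG (hp1 v hvW)
      rcases hbip.2.2 hadj with ⟨-, h2⟩ | ⟨h2, -⟩
      · exact ⟨h2, hpW v hvW⟩
      · exact absurd hv1 (Set.disjoint_left.1 hdisj.symm h2)
    · rintro v ⟨hv1, hvW⟩ v' ⟨hv1', hvW'⟩ heq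
      rw [← hpp v hvW, heq, hpp v' hvW']
    · rintro u ⟨hu2, huW⟩
      refine ⟨p u, ⟨?_, hpW u huW⟩, hpp u huW⟩
      have hadj := hHG (hp1 u huW)
      rcases hbip.2.2 hadj with ⟨h2, -⟩ | ⟨-, h2⟩
      · exact absurd hu2 (Set.disjoint_left.1 hdisj h2)
      · exact h2
  rw [← hbij.image_eq, Set.ncard_image_of_injOn hbij.injOn]

/-- Construction: an injective system of adjacent pairs gives a matching. -/
lemma covers_of_inj {H : SimpleGraph V} {A : Set V} {f : V → V}
    (hinj : Set.InjOn f A) (hadj : ∀ a ∈ A, H.Adj a (f a))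
    (hdisj : ∀ a ∈ A, ∀ a' ∈ A, f a ≠ a') :
    CoversAll H ((fun a => s(a, f a)) '' A) (A ∪ f '' A) := by
  refine ⟨?_, ?_, ?_⟩
  · rintro e ⟨a, ha, rfl⟩
    exact (hadj a ha)
  · rintro v (hv | ⟨a0, ha0, rfl⟩)
    · refine ⟨s(v, f v), ⟨⟨v, hv, rfl⟩, Sym2.mem_mk_left _ _⟩, ?_⟩
      rintro e ⟨⟨a, ha, rfl⟩, hve⟩
      rcases Sym2.mem_iff.1 hve with rfl | rfl
      · rfl
      · exact absurd rfl (hdisj a ha _ hv)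
    · refine ⟨s(a0, f a0), ⟨⟨a0, ha0, rfl⟩, Sym2.mem_mk_right _ _⟩, ?_⟩
      rintro e ⟨⟨a, ha, rfl⟩, hve⟩
      rcases Sym2.mem_iff.1 hve with h | h
      · exact absurd h (hdisj a0 ha0 a ha)
      · obtain rfl := hinj ha0 ha h
        rfl
  · rintro e ⟨a, ha, rfl⟩ v hv
    rcases Sym2.mem_iff.1 hv with rfl | rfl
    · exact Or.inl ha
    · exact Or.inr ⟨a, ha, rfl⟩

end SMPAux2

section SMPAux3

variable {V : Type*}

lemma exchange_sum {α β : Type*} (S : Finset α) (T : Finset β) (r : α → β → Prop)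
    [∀ a b, Decidable (r a b)] :
    ∑ a ∈ S, (T.filter (r a)).card = ∑ b ∈ T, (S.filter (fun a => r a b)).card := by
  simp_rw [Finset.card_filter]
  exact Finset.sum_comm

lemma hall_bound [Fintype V] [DecidableEq V] {G : SimpleGraph V} {k : ℕ} (hk : 0 < k)
    (hreg : ∀ v : V, (G.neighborSet v).ncard = k) {V1 V2 : Set V}
    (hbip : Bipartition G V1 V2) {F : Set (Sym2 V)} (hF : F ⊆ G.edgeSet)
    (hFk : F.ncard < k) (S : Finset V) (hS : ↑S ⊆ V1) :
    S.card ≤ (S.biUnion (fun a => ((G.deleteEdges F).neighborSet a).toFinite.toFinset)).card := by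
  classical
  set H := G.deleteEdges F with hH
  have hHle : H ≤ G := SimpleGraph.deleteEdges_le F
  set T := S.biUnion (fun a => (H.neighborSet a).toFinite.toFinset) with hT
  set Ff := (Set.toFinite F).toFinset with hFf
  have hdeg : ∀ a : V, (G.neighborSet a).toFinite.toFinset.card = k := by
    intro a
    rw [← Set.ncard_eq_toFinset_card]
    exact hreg a
  -- Step A
  have stepA : ∀ a ∈ S, k ≤ ((H.neighborSet a).toFinite.toFinset).card +
      (Ff.filter (fun e => a ∈ e)).card := by
    intro a _
    have hsub : (H.neighborSet a).toFinite.toFinset ⊆ (G.neighborSet a).toFinite.toFinset := by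
      intro b hb
      rw [Set.Finite.mem_toFinset] at hb ⊢
      exact hHle hb
    have hinj : ((G.neighborSet a).toFinite.toFinset \ (H.neighborSet a).toFinite.toFinset).card
        ≤ (Ff.filter (fun e => a ∈ e)).card := by
      apply Finset.card_le_card_of_injOn (fun b => s(a, b))
      · intro b hb
        rw [Finset.mem_coe, Finset.mem_sdiff, Set.Finite.mem_toFinset, Set.Finite.mem_toFinset] at hb
        obtain ⟨hbG, hbH⟩ := hb
        rw [Finset.mem_coe, Finset.mem_filter]
        refine ⟨?_, Sym2.mem_mk_left _ _⟩
        rw [hFf, Set.Finite.mem_toFinset]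
        by_contra hcon
        exact hbH (by rw [hH]; exact (SimpleGraph.deleteEdges_adj).2 ⟨hbG, hcon⟩)
      · intro b _ b' _ h
        exact Sym2.congr_right.1 h
    have hcd := Finset.card_sdiff_of_subset hsub
    rw [hdeg a] at hcd
    omega
  -- Step B
  have stepB : ∑ a ∈ S, (Ff.filter (fun e => a ∈ e)).card ≤ Ff.card := by
    rw [exchange_sum S Ff (fun a e => a ∈ e)]
    have : ∀ e ∈ Ff, (S.filter (fun a => a ∈ e)).card ≤ 1 := by
      intro e he
      rw [hFf, Set.Finite.mem_toFinset] at he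
      have heG := hF he
      induction e using Sym2.ind with
      | _ x y =>
        rw [SimpleGraph.mem_edgeSet] at heG
        rw [Finset.card_le_one]
        intro a ha b hb
        rw [Finset.mem_filter] at ha hb
        have haV1 : a ∈ V1 := hS ha.1
        have hbV1 : b ∈ V1 := hS hb.1
        have key : ∀ c : V, c ∈ V1 → c ∈ s(x, y) → (x ∈ V1 → c = x) ∧ (x ∈ V2 → c = y) := by
          intro c hc hce
          rcases Sym2.mem_iff.1 hce with rfl | rfl
          · constructor
            · intro _; rfl
            · intro hx2; exact absurd hc (Set.disjoint_left.1 hbip.1.symm hx2)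
          · constructor
            · intro hx1
              rcases hbip.2.2 heG with ⟨-, h2⟩ | ⟨h2, -⟩
              · exact absurd hc (Set.disjoint_left.1 hbip.1.symm h2)
              · exact absurd hx1 (Set.disjoint_left.1 hbip.1.symm h2)
            · intro _; rfl
        rcases hbip.2.2 heG with ⟨hx1, -⟩ | ⟨hx2, -⟩
        · rw [(key a haV1 ha.2).1 hx1, (key b hbV1 hb.2).1 hx1]
        · rw [(key a haV1 ha.2).2 hx2, (key b hbV1 hb.2).2 hx2]
    calc ∑ e ∈ Ff, (S.filter (fun a => a ∈ e)).card ≤ ∑ _e ∈ Ff, 1 :=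
          Finset.sum_le_sum this
      _ = Ff.card := by rw [Finset.sum_const, smul_eq_mul, mul_one]
  -- Step C
  have stepC : ∑ a ∈ S, ((H.neighborSet a).toFinite.toFinset).card ≤ k * T.card := by
    have heq : ∀ a ∈ S, ((H.neighborSet a).toFinite.toFinset).card
        = (T.filter (fun b => H.Adj a b)).card := by
      intro a ha
      congr 1
      ext b
      rw [Set.Finite.mem_toFinset, Finset.mem_filter, SimpleGraph.mem_neighborSet]
      constructor
      · intro h
        refine ⟨Finset.mem_biUnion.2 ⟨a, ha, ?_⟩, h⟩
        rw [Set.Finite.mem_toFinset]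
        exact h
      · exact fun h => h.2
    rw [Finset.sum_congr rfl heq, exchange_sum S T (fun a b => H.Adj a b)]
    have : ∀ b ∈ T, (S.filter (fun a => H.Adj a b)).card ≤ k := by
      intro b _
      rw [← hdeg b]
      apply Finset.card_le_card
      intro a ha
      rw [Finset.mem_filter] at ha
      rw [Set.Finite.mem_toFinset]
      exact (hHle ha.2).symm
    calc ∑ b ∈ T, (S.filter (fun a => H.Adj a b)).card ≤ ∑ _b ∈ T, k :=
          Finset.sum_le_sum this
      _ = k * T.card := by rw [Finset.sum_const, smul_eq_mul, mul_comm]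
  -- combine
  have hFfc : Ff.card < k := by
    rw [hFf, ← Set.ncard_eq_toFinset_card]
    exact hFk
  have main : k * S.card < k * (T.card + 1) := by
    calc k * S.card = ∑ _a ∈ S, k := by rw [Finset.sum_const, smul_eq_mul, mul_comm]
      _ ≤ ∑ a ∈ S, (((H.neighborSet a).toFinite.toFinset).card
            + (Ff.filter (fun e => a ∈ e)).card) := Finset.sum_le_sum stepA
      _ = ∑ a ∈ S, ((H.neighborSet a).toFinite.toFinset).card
            + ∑ a ∈ S, (Ff.filter (fun e => a ∈ e)).card := Finset.sum_add_distrib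
      _ ≤ k * T.card + Ff.card := Nat.add_le_add stepC stepB
      _ < k * T.card + k := by omega
      _ = k * (T.card + 1) := by ring
  have := Nat.lt_of_mul_lt_mul_left main
  omega


lemma hall_closed [Fintype V] [DecidableEq V] {G : SimpleGraph V} {k : ℕ} (hk : 0 < k)
    (hreg : ∀ v : V, (G.neighborSet v).ncard = k) {V1 V2 : Set V}
    (hbip : Bipartition G V1 V2) (hconn : G.Connected) {u v : V} (hu : u ∈ V1) (hv : v ∈ V2)
    (S : Finset V) (hS : ↑S ⊆ V1 \ {u}) :
    S.card ≤ ((S.biUnion (fun a => (G.neighborSet a).toFinite.toFinset)).erase v).card := by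
  classical
  set T := S.biUnion (fun a => (G.neighborSet a).toFinite.toFinset) with hT
  have hSV1 : ↑S ⊆ V1 := hS.trans Set.diff_subset
  have hbase : S.card ≤ T.card := by
    have h0 : (∅ : Set (Sym2 V)) ⊆ G.edgeSet := Set.empty_subset _
    have h1 : (∅ : Set (Sym2 V)).ncard < k := by simpa using hk
    have hmain := hall_bound hk hreg hbip h0 h1 S hSV1
    have hfun : (fun a => ((G.deleteEdges (∅ : Set (Sym2 V))).neighborSet a).toFinite.toFinset)
        = (fun a => (G.neighborSet a).toFinite.toFinset) := by
      funext a
      ext b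
      simp [Set.Finite.mem_toFinset, SimpleGraph.deleteEdges_adj, SimpleGraph.mem_neighborSet]
    rw [hfun] at hmain
    exact hmain
  have hdeg : ∀ a : V, (G.neighborSet a).toFinite.toFinset.card = k := by
    intro a
    rw [← Set.ncard_eq_toFinset_card]
    exact hreg a
  by_cases hvT : v ∈ T
  · rw [Finset.card_erase_of_mem hvT]
    rcases Nat.lt_or_ge S.card T.card with h | hcard
    · omega
    -- tight case : T.card ≤ S.card, so T.card = S.card
    exfalso
    have heq : ∀ a ∈ S, (G.neighborSet a).toFinite.toFinset.card
        = (T.filter (fun b => G.Adj a b)).card := by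
      intro a ha
      congr 1
      ext b
      rw [Set.Finite.mem_toFinset, Finset.mem_filter, SimpleGraph.mem_neighborSet]
      constructor
      · intro h
        refine ⟨Finset.mem_biUnion.2 ⟨a, ha, ?_⟩, h⟩
        rw [Set.Finite.mem_toFinset]
        exact h
      · exact fun h => h.2
    have hsum : k * S.card = ∑ b ∈ T, (S.filter (fun a => G.Adj a b)).card := by
      calc k * S.card = ∑ _a ∈ S, k := by rw [Finset.sum_const, smul_eq_mul, mul_comm]
        _ = ∑ a ∈ S, (G.neighborSet a).toFinite.toFinset.card := by
              exact Finset.sum_congr rfl (fun a _ => (hdeg a).symm)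
        _ = ∑ a ∈ S, (T.filter (fun b => G.Adj a b)).card := Finset.sum_congr rfl heq
        _ = ∑ b ∈ T, (S.filter (fun a => G.Adj a b)).card :=
              exchange_sum S T (fun a b => G.Adj a b)
    have hle : ∀ b ∈ T, (S.filter (fun a => G.Adj a b)).card ≤ k := by
      intro b _
      rw [← hdeg b]
      apply Finset.card_le_card
      intro a ha
      rw [Finset.mem_filter] at ha
      rw [Set.Finite.mem_toFinset]
      exact ha.2.symm
    have hall_eq : ∀ b ∈ T, (S.filter (fun a => G.Adj a b)).card = k := by
      by_contra hcon
      push_neg at hcon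
      obtain ⟨b0, hb0T, hb0⟩ := hcon
      have hlt : ∑ b ∈ T, (S.filter (fun a => G.Adj a b)).card < ∑ _b ∈ T, k :=
        Finset.sum_lt_sum hle ⟨b0, hb0T, lt_of_le_of_ne (hle b0 hb0T) hb0⟩
      rw [Finset.sum_const, smul_eq_mul] at hlt
      have h2 : k * S.card < T.card * k := by rw [hsum]; exact hlt
      have h3 : T.card * k ≤ S.card * k := Nat.mul_le_mul_right k hcard
      have h4 := lt_of_lt_of_le h2 h3
      rw [mul_comm] at h4
      exact lt_irrefl _ h4
    have hN : ∀ b ∈ T, (G.neighborSet b).toFinite.toFinset ⊆ S := by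
      intro b hb
      have hsub1 : S.filter (fun a => G.Adj a b) ⊆ (G.neighborSet b).toFinite.toFinset := by
        intro a ha
        rw [Finset.mem_filter] at ha
        rw [Set.Finite.mem_toFinset]
        exact ha.2.symm
      have hcardle : ((G.neighborSet b).toFinite.toFinset).card
          ≤ (S.filter (fun a => G.Adj a b)).card := by
        rw [hdeg b, hall_eq b hb]
      have := Finset.eq_of_subset_of_card_le hsub1 hcardle
      rw [← this]
      exact (Finset.filter_subset _ _)
    -- closure under adjacency
    have step : ∀ x y : V, (x ∈ S ∨ x ∈ T) → G.Adj x y → (y ∈ S ∨ y ∈ T) := by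
      intro x y hx hadj
      rcases hx with hx | hx
      · right
        exact Finset.mem_biUnion.2 ⟨x, hx, by rw [Set.Finite.mem_toFinset]; exact hadj⟩
      · left
        exact hN x hx (by rw [Set.Finite.mem_toFinset]; exact hadj)
    have reach : ∀ (x y : V) (w : G.Walk x y), (x ∈ S ∨ x ∈ T) → (y ∈ S ∨ y ∈ T) := by
      intro x y w
      induction w with
      | nil => exact fun h => h
      | cons h p ih => exact fun hx => ih (step _ _ hx h)
    have hSne : S.Nonempty := by
      rw [← Finset.card_pos]
      have : T.Nonempty := ⟨v, hvT⟩
      rw [← Finset.card_pos] at this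
      omega
    obtain ⟨a0, ha0⟩ := hSne
    obtain ⟨w⟩ := hconn.preconnected a0 u
    rcases reach a0 u w (Or.inl ha0) with huS | huT
    · exact (hS huS).2 rfl
    · obtain ⟨a, haS, hanb⟩ := Finset.mem_biUnion.1 huT
      rw [Set.Finite.mem_toFinset, SimpleGraph.mem_neighborSet] at hanb
      have haV1 : a ∈ V1 := hSV1 haS
      rcases hbip.2.2 hanb with ⟨-, h2⟩ | ⟨h2, -⟩
      · exact Set.disjoint_left.1 hbip.1 hu h2
      · exact Set.disjoint_left.1 hbip.1 haV1 h2
  · rw [Finset.erase_eq_of_notMem hvT]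
    exact hbase


lemma exists_inj_matching [Fintype V] {G : SimpleGraph V} {k : ℕ} (hk : 0 < k)
    (hreg : ∀ v : V, (G.neighborSet v).ncard = k) {V1 V2 : Set V}
    (hbip : Bipartition G V1 V2) {F : Set (Sym2 V)} (hF : F ⊆ G.edgeSet)
    (hFk : F.ncard < k) {A : Set V} (hA : A ⊆ V1) :
    ∃ f : V → V, Set.InjOn f A ∧ ∀ a ∈ A, f a ∈ V2 ∧ (G.deleteEdges F).Adj a (f a) := by
  classical
  set H := G.deleteEdges F with hH
  set t : A → Finset V := fun a => (H.neighborSet ↑a).toFinite.toFinset with ht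
  have hall : ∀ s : Finset ↥A, s.card ≤ (s.biUnion t).card := by
    intro s
    have hsubs : ↑(s.image (Subtype.val : A → V)) ⊆ V1 := by
      intro a ha
      rw [Finset.coe_image] at ha
      obtain ⟨a', -, rfl⟩ := ha
      exact hA a'.2
    have h3 := hall_bound hk hreg hbip hF hFk (s.image Subtype.val) hsubs
    rw [Finset.card_image_of_injective _ Subtype.val_injective] at h3
    rw [Finset.image_biUnion] at h3
    exact h3
  obtain ⟨f0, hf0inj, hf0mem⟩ := (Finset.all_card_le_biUnion_card_iff_exists_injective t).1 hall
  refine ⟨fun x => if h : x ∈ A then f0 ⟨x, h⟩ else x, ?_, ?_⟩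
  · intro a ha b hb hfeq
    simp only [dif_pos ha, dif_pos hb] at hfeq
    have := hf0inj hfeq
    exact congrArg Subtype.val this
  · intro a ha
    simp only [dif_pos ha]
    have hmem := hf0mem ⟨a, ha⟩
    rw [ht, Set.Finite.mem_toFinset, SimpleGraph.mem_neighborSet] at hmem
    have hGadj : G.Adj a (f0 ⟨a, ha⟩) := SimpleGraph.deleteEdges_le F hmem
    refine ⟨?_, hmem⟩
    rcases hbip.2.2 hGadj with ⟨-, h2⟩ | ⟨h2, -⟩
    · exact h2
    · exact absurd (hA ha) (Set.disjoint_left.1 hbip.1.symm h2)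

lemma exists_inj_matching_avoid [Fintype V] {G : SimpleGraph V} {k : ℕ} (hk : 0 < k)
    (hreg : ∀ v : V, (G.neighborSet v).ncard = k) {V1 V2 : Set V}
    (hbip : Bipartition G V1 V2) (hconn : G.Connected) {u v : V} (hu : u ∈ V1)
    (hv : v ∈ V2) :
    ∃ f : V → V, Set.InjOn f (V1 \ {u}) ∧
      ∀ a ∈ V1 \ {u}, f a ∈ V2 \ {v} ∧ G.Adj a (f a) := by
  classical
  set A : Set V := V1 \ {u} with hA
  set t : A → Finset V := fun a => ((G.neighborSet ↑a).toFinite.toFinset).erase v with ht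
  have hall : ∀ s : Finset ↥A, s.card ≤ (s.biUnion t).card := by
    intro s
    have hsubs : ↑(s.image (Subtype.val : A → V)) ⊆ V1 \ {u} := by
      intro a ha
      rw [Finset.coe_image] at ha
      obtain ⟨a', -, rfl⟩ := ha
      exact a'.2
    have h3 := hall_closed hk hreg hbip hconn hu hv (s.image Subtype.val) hsubs
    rw [Finset.card_image_of_injective _ Subtype.val_injective] at h3
    have heq : ((s.image Subtype.val).biUnion
          (fun a => (G.neighborSet a).toFinite.toFinset)).erase v
        = s.biUnion t := by
      rw [Finset.image_biUnion]
      ext b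
      simp only [Finset.mem_erase, Finset.mem_biUnion, ht]
      tauto
    rw [heq] at h3
    exact h3
  obtain ⟨f0, hf0inj, hf0mem⟩ := (Finset.all_card_le_biUnion_card_iff_exists_injective t).1 hall
  refine ⟨fun x => if h : x ∈ A then f0 ⟨x, h⟩ else x, ?_, ?_⟩
  · intro a ha b hb hfeq
    simp only [dif_pos ha, dif_pos hb] at hfeq
    exact congrArg Subtype.val (hf0inj hfeq)
  · intro a ha
    simp only [dif_pos ha]
    have hmem := hf0mem ⟨a, ha⟩
    rw [ht] at hmem
    simp only [Finset.mem_erase, Set.Finite.mem_toFinset, SimpleGraph.mem_neighborSet] at hmem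
    obtain ⟨hnev, hadj⟩ := hmem
    refine ⟨⟨?_, hnev⟩, hadj⟩
    rcases hbip.2.2 hadj with ⟨-, h2⟩ | ⟨h2, -⟩
    · exact h2
    · exact absurd ha.1 (Set.disjoint_left.1 hbip.1.symm h2)

end SMPAux3

section SMPAux4

variable {V : Type*}

lemma bipartition_symm {G : SimpleGraph V} {V1 V2 : Set V} (hbip : Bipartition G V1 V2) :
    Bipartition G V2 V1 := by
  refine ⟨hbip.1.symm, by rw [Set.union_comm]; exact hbip.2.1, fun u v h => ?_⟩
  rcases hbip.2.2 h with ⟨h1, h2⟩ | ⟨h1, h2⟩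
  · exact Or.inr ⟨h1, h2⟩
  · exact Or.inl ⟨h1, h2⟩

lemma eq_ncard_sides [Fintype V] {G : SimpleGraph V} {k : ℕ} (hk : 0 < k)
    (hreg : ∀ v : V, (G.neighborSet v).ncard = k) {V1 V2 : Set V}
    (hbip : Bipartition G V1 V2) : V1.ncard = V2.ncard := by
  have h0 : (∅ : Set (Sym2 V)) ⊆ G.edgeSet := Set.empty_subset _
  have h1 : (∅ : Set (Sym2 V)).ncard < k := by simpa using hk
  obtain ⟨f, hinj, hmem⟩ := exists_inj_matching hk hreg hbip h0 h1 (Set.Subset.refl V1)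
  obtain ⟨g, ginj, gmem⟩ :=
    exists_inj_matching hk hreg (bipartition_symm hbip) h0 h1 (Set.Subset.refl V2)
  apply le_antisymm
  · rw [← Set.ncard_image_of_injOn hinj]
    apply Set.ncard_le_ncard _ (Set.toFinite _)
    rintro y ⟨a, ha, rfl⟩
    exact (hmem a ha).1
  · rw [← Set.ncard_image_of_injOn ginj]
    apply Set.ncard_le_ncard _ (Set.toFinite _)
    rintro y ⟨a, ha, rfl⟩
    exact (gmem a ha).1

lemma covers_univ [Fintype V] {G : SimpleGraph V} {k : ℕ} (hk : 0 < k)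
    (hreg : ∀ v : V, (G.neighborSet v).ncard = k) {V1 V2 : Set V}
    (hbip : Bipartition G V1 V2) {F : Set (Sym2 V)} (hF : F ⊆ G.edgeSet)
    (hFk : F.ncard < k) : ∃ M, CoversAll (G.deleteEdges F) M Set.univ := by
  obtain ⟨f, hinj, hmem⟩ := exists_inj_matching hk hreg hbip hF hFk (Set.Subset.refl V1)
  have hdisj : ∀ a ∈ V1, ∀ a' ∈ V1, f a ≠ a' := fun a ha a' ha' h =>
    Set.disjoint_left.1 hbip.1 ha' (h ▸ (hmem a ha).1)
  have hcov := covers_of_inj hinj (fun a ha => (hmem a ha).2) hdisj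
  have himg : f '' V1 = V2 := by
    apply Set.eq_of_subset_of_ncard_le
    · rintro y ⟨a, ha, rfl⟩
      exact (hmem a ha).1
    · rw [Set.ncard_image_of_injOn hinj, eq_ncard_sides hk hreg hbip]
    · exact Set.toFinite _
  rw [himg, hbip.2.1] at hcov
  exact ⟨_, hcov⟩

lemma covers_apm [Fintype V] {G : SimpleGraph V} {k : ℕ} (hk : 0 < k)
    (hreg : ∀ v : V, (G.neighborSet v).ncard = k) {V1 V2 : Set V}
    (hbip : Bipartition G V1 V2) (h2 : V2.Nonempty) {F : Set (Sym2 V)}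
    (hF : F ⊆ G.edgeSet) (hFk : F.ncard < k) {x : V} (hx : x ∈ V1) :
    ∃ w ∈ V2, w ≠ x ∧ ∃ M, CoversAll (G.deleteEdges F) M ({x}ᶜ \ {w}) := by
  have hAsub : V1 \ {x} ⊆ V1 := Set.diff_subset
  obtain ⟨f, hinj, hmem⟩ := exists_inj_matching hk hreg hbip hF hFk hAsub
  have himgsub : f '' (V1 \ {x}) ⊆ V2 := by
    rintro y ⟨a, ha, rfl⟩
    exact (hmem a ha).1
  have hxs : ({x} : Set V) ⊆ V1 := by simpa using hx
  have hAcard : (V1 \ {x}).ncard = V1.ncard - 1 := by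
    rw [Set.ncard_diff hxs, Set.ncard_singleton]
  have hV1pos : 0 < V1.ncard := (Set.ncard_pos (Set.toFinite _)).2 ⟨x, hx⟩
  have hsides := eq_ncard_sides hk hreg hbip
  have himgcard : (f '' (V1 \ {x})).ncard = V2.ncard - 1 := by
    rw [Set.ncard_image_of_injOn hinj, hAcard, hsides]
  have hdiff : (V2 \ f '' (V1 \ {x})).ncard = 1 := by
    rw [Set.ncard_diff himgsub, himgcard]
    omega
  obtain ⟨w, hw⟩ := Set.ncard_eq_one.1 hdiff
  have hwV2 : w ∈ V2 := by
    have : w ∈ V2 \ f '' (V1 \ {x}) := by rw [hw]; rfl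
    exact this.1
  have hwx : w ≠ x := fun h => Set.disjoint_left.1 hbip.1 hx (h ▸ hwV2)
  have himg : f '' (V1 \ {x}) = V2 \ {w} := by
    rw [← Set.diff_diff_cancel_left himgsub, hw]
  have hdisj : ∀ a ∈ V1 \ {x}, ∀ a' ∈ V1 \ {x}, f a ≠ a' := fun a ha a' ha' h =>
    Set.disjoint_left.1 hbip.1 ha'.1 (h ▸ (hmem a ha).1)
  have hcov := covers_of_inj hinj (fun a ha => (hmem a ha).2) hdisj
  rw [himg] at hcov
  have hset : (V1 \ {x}) ∪ (V2 \ {w}) = ({x}ᶜ \ {w}) := by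
    ext y
    have hy : y ∈ V1 ∨ y ∈ V2 := by
      have := hbip.2.1
      have hyu : y ∈ V1 ∪ V2 := by rw [this]; trivial
      exact hyu
    constructor
    · rintro (⟨hy1, hyx⟩ | ⟨hy2, hyw⟩)
      · exact ⟨hyx, fun h => Set.disjoint_left.1 hbip.1 hy1 ((h : y = w) ▸ hwV2)⟩
      · exact ⟨fun h => Set.disjoint_left.1 hbip.1 hx ((h : y = x) ▸ hy2), hyw⟩
    · rintro ⟨hyx, hyw⟩
      rcases hy with hy1 | hy2
      · exact Or.inl ⟨hy1, hyx⟩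
      · exact Or.inr ⟨hy2, hyw⟩
  rw [hset] at hcov
  exact ⟨w, hwV2, hwx, _, hcov⟩

lemma covers_two [Fintype V] {G : SimpleGraph V} {k : ℕ} (hk : 0 < k)
    (hreg : ∀ v : V, (G.neighborSet v).ncard = k) {V1 V2 : Set V}
    (hbip : Bipartition G V1 V2) (hconn : G.Connected) {u v : V} (hu : u ∈ V1)
    (hv : v ∈ V2) : ∃ M, CoversAll G M ({u, v}ᶜ : Set V) := by
  obtain ⟨f, hinj, hmem⟩ := exists_inj_matching_avoid hk hreg hbip hconn hu hv
  have himgsub : f '' (V1 \ {u}) ⊆ V2 \ {v} := by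
    rintro y ⟨a, ha, rfl⟩
    exact (hmem a ha).1
  have hsides := eq_ncard_sides hk hreg hbip
  have hus : ({u} : Set V) ⊆ V1 := by simpa using hu
  have hvs : ({v} : Set V) ⊆ V2 := by simpa using hv
  have himg : f '' (V1 \ {u}) = V2 \ {v} := by
    apply Set.eq_of_subset_of_ncard_le himgsub
    rw [Set.ncard_image_of_injOn hinj, Set.ncard_diff hus, Set.ncard_diff hvs,
      Set.ncard_singleton, Set.ncard_singleton, hsides]
  have hdisj : ∀ a ∈ V1 \ {u}, ∀ a' ∈ V1 \ {u}, f a ≠ a' := fun a ha a' ha' h =>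
    Set.disjoint_left.1 hbip.1 ha'.1 (h ▸ (hmem a ha).1.1)
  have hcov := covers_of_inj hinj (fun a ha => (hmem a ha).2) hdisj
  rw [himg] at hcov
  have hset : (V1 \ {u}) ∪ (V2 \ {v}) = ({u, v}ᶜ : Set V) := by
    ext y
    have hy : y ∈ V1 ∨ y ∈ V2 := by
      have hyu : y ∈ V1 ∪ V2 := by rw [hbip.2.1]; trivial
      exact hyu
    simp only [Set.mem_union, Set.mem_diff, Set.mem_compl_iff, Set.mem_insert_iff,
      Set.mem_singleton_iff, not_or]
    constructor
    · rintro (⟨hy1, hyu'⟩ | ⟨hy2, hyv'⟩)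
      · exact ⟨hyu', fun h => Set.disjoint_left.1 hbip.1 hy1 (h ▸ hv)⟩
      · exact ⟨fun h => Set.disjoint_left.1 hbip.1 hu (h ▸ hy2), hyv'⟩
    · rintro ⟨hyu', hyv'⟩
      rcases hy with hy1 | hy2
      · exact Or.inl ⟨hy1, hyu'⟩
      · exact Or.inr ⟨hy2, hyv'⟩
  rw [hset] at hcov
  exact ⟨_, hcov⟩

end SMPAux4

/-- Let `G` be a connected, bipartite, `k`-regular finite simple graph with `k ≥ 3`,
with bipartition classes `V₁, V₂` (both nonempty). Then `smp(G) = 2` and every optimal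
strong matching preclusion set of `G` is a set of two vertices from the same
bipartition class. -/
theorem smp_regular_bipartite {V : Type*} [Fintype V] (G : SimpleGraph V) (k : ℕ)
    (hk : 3 ≤ k) (hreg : ∀ v : V, (G.neighborSet v).ncard = k) (hconn : G.Connected)
    (V1 V2 : Set V) (hbip : Bipartition G V1 V2) (h1 : V1.Nonempty) (h2 : V2.Nonempty) :
    IsLeast {m : ℕ | ∃ (S : Set V) (F : Set (Sym2 V)),
        IsSMPSet G S F ∧ m = S.ncard + F.ncard} 2 ∧
    ∀ (S : Set V) (F : Set (Sym2 V)), IsSMPSet G S F → S.ncard + F.ncard = 2 →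
      F = ∅ ∧ ∃ u v : V, u ≠ v ∧ S = {u, v} ∧
        ((u ∈ V1 ∧ v ∈ V1) ∨ (u ∈ V2 ∧ v ∈ V2)) := by
  classical
  have hk0 : 0 < k := by omega
  have hbip' := bipartition_symm hbip
  have hsides := eq_ncard_sides hk0 hreg hbip
  have hdVV : ∀ y : V, y ∈ V1 → y ∈ V2 → False := fun y hy1 hy2 =>
    Set.disjoint_left.1 hbip.1 hy1 hy2
  have huniv : ∀ y : V, y ∈ V1 ∨ y ∈ V2 := by
    intro y
    have : y ∈ V1 ∪ V2 := by rw [hbip.2.1]; trivial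
    exact this
  have hm3 : 3 ≤ V1.ncard := by
    obtain ⟨w, hw⟩ := h2
    have hnb : G.neighborSet w ⊆ V1 := by
      intro y hy
      rcases hbip.2.2 (hy : G.Adj w y) with ⟨hh1, -⟩ | ⟨-, hh1⟩
      · exact absurd hw (fun hc => hdVV w hh1 hc)
      · exact hh1
    calc 3 ≤ k := hk
      _ = (G.neighborSet w).ncard := (hreg w).symm
      _ ≤ V1.ncard := Set.ncard_le_ncard hnb (Set.toFinite _)
  -- a contradiction scheme for each small scenario
  have noPM : ∀ F : Set (Sym2 V), F ⊆ G.edgeSet → F.ncard < k →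
      HasNoMatchings ((G.deleteEdges F).induce ((∅ : Set V)ᶜ)) → False := by
    intro F hFsub hFk hno
    obtain ⟨M, hcov⟩ := covers_univ hk0 hreg hbip hFsub hFk
    have hcov' : CoversAll (G.deleteEdges F) M ((∅ : Set V)ᶜ) := by
      rwa [Set.compl_empty]
    exact hno.1 (transfer_PM.2 ⟨M, hcov'⟩)
  have noAPM : ∀ (F : Set (Sym2 V)) (x : V), F ⊆ G.edgeSet → F.ncard < k →
      HasNoMatchings ((G.deleteEdges F).induce (({x} : Set V)ᶜ)) → False := by
    intro F x hFsub hFk hno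
    rcases huniv x with hx | hx
    · obtain ⟨w, hwV2, hwx, M, hcov⟩ := covers_apm hk0 hreg hbip h2 hFsub hFk hx
      exact hno.2 (transfer_APM.2 ⟨w, (fun h => hwx h : w ∉ ({x} : Set V)), M, hcov⟩)
    · obtain ⟨w, hwV1, hwx, M, hcov⟩ := covers_apm hk0 hreg hbip' h1 hFsub hFk hx
      exact hno.2 (transfer_APM.2 ⟨w, (fun h => hwx h : w ∉ ({x} : Set V)), M, hcov⟩)
  have noMixed : ∀ u v : V, u ∈ V1 → v ∈ V2 →
      HasNoMatchings ((G.deleteEdges (∅ : Set (Sym2 V))).induce (({u, v} : Set V)ᶜ)) →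
      False := by
    intro u v hu hv hno
    obtain ⟨M, hcov⟩ := covers_two hk0 hreg hbip hconn hu hv
    have hcov' : CoversAll (G.deleteEdges (∅ : Set (Sym2 V))) M (({u, v} : Set V)ᶜ) := by
      rwa [SimpleGraph.deleteEdges_empty]
    exact hno.1 (transfer_PM.2 ⟨M, hcov'⟩)
  refine ⟨⟨?_, ?_⟩, ?_⟩
  · -- 2 is attained
    obtain ⟨u, hu, u', hu', hne⟩ := (Set.one_lt_ncard (Set.toFinite V1)).1 (show 1 < V1.ncard by omega)
    set S : Set V := {u, u'} with hSdef
    have hSV1 : S ⊆ V1 := by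
      intro y hy
      rcases hy with rfl | rfl
      · exact hu
      · exact hu'
    have hScard : S.ncard = 2 := Set.ncard_pair hne
    have hV2S : ∀ T : Set V, T ⊆ V1 → V2 ∩ Tᶜ = V2 := by
      intro T hT
      ext y
      exact ⟨fun h => h.1, fun h => ⟨h, fun hc => hdVV y (hT hc) h⟩⟩
    refine ⟨S, ∅, ⟨Set.empty_subset _, ?_, ?_⟩, by
      rw [hScard, Set.ncard_empty]⟩
    · -- no perfect matching
      rintro ⟨M, hM⟩
      rw [SimpleGraph.deleteEdges_empty] at hM
      obtain ⟨M', hcov⟩ := transfer_PM.1 ⟨M, hM⟩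
      have hcount := covers_count (le_refl G) hbip hcov
      rw [hV2S S hSV1] at hcount
      rw [← Set.diff_eq] at hcount
      rw [Set.ncard_diff hSV1, hScard] at hcount
      omega
    · -- no almost perfect matching
      rintro ⟨M, hM⟩
      rw [SimpleGraph.deleteEdges_empty] at hM
      obtain ⟨w, hwmem, M', hcov⟩ := transfer_APM.1 ⟨M, hM⟩
      have hcount := covers_count (le_refl G) hbip hcov
      have hkey : Sᶜ \ {w} = (S ∪ {w})ᶜ := by
        rw [Set.compl_union, Set.diff_eq]
      rw [hkey] at hcount
      have hwS : w ∉ S := hwmem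
      rcases huniv w with hw1 | hw2
      · have hsub : S ∪ {w} ⊆ V1 := by
          intro y hy
          rcases hy with hy | hy
          · exact hSV1 hy
          · rw [hy]; exact hw1
        have hcard3 : (S ∪ {w}).ncard = 3 := by
          rw [Set.ncard_union_eq (by simpa using hwS) (Set.toFinite _) (Set.toFinite _),
            hScard, Set.ncard_singleton]
        rw [hV2S _ hsub, ← Set.diff_eq, Set.ncard_diff hsub, hcard3] at hcount
        omega
      · have hVeq : V1 ∩ (S ∪ {w})ᶜ = V1 \ S := by
          ext y
          constructor
          · rintro ⟨hy1, hy2⟩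
            exact ⟨hy1, fun hc => hy2 (Or.inl hc)⟩
          · rintro ⟨hy1, hy2⟩
            refine ⟨hy1, fun hc => ?_⟩
            rcases hc with hc | hc
            · exact hy2 hc
            · rw [hc] at hy1; exact hdVV w hy1 hw2
        have hVeq2 : V2 ∩ (S ∪ {w})ᶜ = V2 \ {w} := by
          ext y
          constructor
          · rintro ⟨hy1, hy2⟩
            exact ⟨hy1, fun hc => hy2 (Or.inr hc)⟩
          · rintro ⟨hy1, hy2⟩
            refine ⟨hy1, fun hc => ?_⟩
            rcases hc with hc | hc
            · exact hdVV y (hSV1 hc) hy1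
            · exact hy2 hc
        rw [hVeq, hVeq2, Set.ncard_diff hSV1, hScard,
          Set.ncard_diff (by simpa using hw2), Set.ncard_singleton] at hcount
        omega
  · -- lower bound
    rintro m ⟨S, F, ⟨hFsub, hno⟩, rfl⟩
    by_contra hcon
    push_neg at hcon
    have hFk : F.ncard < k := by omega
    have hScases : S.ncard = 0 ∨ S.ncard = 1 := by omega
    rcases hScases with hS0 | hS1
    · obtain rfl : S = ∅ := (Set.ncard_eq_zero (Set.toFinite S)).1 hS0
      exact noPM F hFsub hFk hno
    · obtain ⟨x, rfl⟩ := Set.ncard_eq_one.1 hS1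
      exact noAPM F x hFsub hFk hno
  · -- characterization of optimal sets
    rintro S F ⟨hFsub, hno⟩ hsum
    have hc : S.ncard = 0 ∨ S.ncard = 1 ∨ S.ncard = 2 := by omega
    rcases hc with hS0 | hS1 | hS2
    · exfalso
      obtain rfl : S = ∅ := (Set.ncard_eq_zero (Set.toFinite S)).1 hS0
      exact noPM F hFsub (by omega) hno
    · exfalso
      obtain ⟨x, rfl⟩ := Set.ncard_eq_one.1 hS1
      exact noAPM F x hFsub (by omega) hno
    · have hF0 : F = ∅ := (Set.ncard_eq_zero (Set.toFinite F)).1 (by omega)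
      subst hF0
      refine ⟨rfl, ?_⟩
      obtain ⟨u, v, hne, rfl⟩ := Set.ncard_eq_two.1 hS2
      refine ⟨u, v, hne, rfl, ?_⟩
      rcases huniv u with hu | hu <;> rcases huniv v with hv | hv
      · exact Or.inl ⟨hu, hv⟩
      · exact absurd hno (by intro hn; exact noMixed u v hu hv hn)
      · exfalso
        apply noMixed v u hv hu
        rwa [Set.pair_comm v u]
      · exact Or.inr ⟨hu, hv⟩
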